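/- For A, B, C real with C > A + B and C not a nonpositive integer, the Gauss hypergeometric series ₂F₁(A, B, C; z) = ∑_{n≥0} (A)_n (B)_n / ((C)_n n!) z^n converges absolutely at z = 1 and ₂F₁(A, B, C; 1) = Γ(C)Γ(C−A−B) / (Γ(C−A)Γ(C−B)). -/

import Mathlib

set_option maxHeartbeats 1000000

open Real Filter Set Topology

/-- Rising factorial (Pochhammer symbol) `(x)_n`. -/
noncomputable def poch (x : ℝ) (n : ℕ) : ℝ := (ascPochhammer ℝ n).eval x

/-- Gauss hypergeometric series `₂F₁(A,B,C;z)`. -/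
noncomputable def hyp (A B C z : ℝ) : ℝ :=
  ∑' n : ℕ, poch A n * poch B n / (poch C n * (n.factorial : ℝ)) * z ^ n

lemma poch_zero (x : ℝ) : poch x 0 = 1 := by simp [poch]

lemma poch_succ (x : ℝ) (n : ℕ) : poch x (n+1) = poch x n * (x + n) :=
  ascPochhammer_succ_eval n x

lemma poch_one (x : ℝ) : poch x 1 = x := by
  rw [show (1:ℕ) = 0 + 1 from rfl, poch_succ]; simp [poch_zero]

lemma poch_eq_prod (x : ℝ) (n : ℕ) : poch x n = ∏ j ∈ Finset.range n, (x + j) := by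
  induction n with
  | zero => simp [poch_zero]
  | succ n ih => rw [poch_succ, Finset.prod_range_succ, ih]

lemma poch_add (x : ℝ) (m n : ℕ) : poch x (m+n) = poch x m * poch (x+m) n := by
  induction n with
  | zero => simp [poch_zero]
  | succ n ih => rw [← add_assoc, poch_succ, ih, poch_succ]; push_cast; ring

lemma poch_pos {x : ℝ} (hx : 0 < x) (n : ℕ) : 0 < poch x n := by
  induction n with
  | zero => simp [poch_zero]
  | succ n ih => rw [poch_succ]; positivity

lemma poch_nonneg {x : ℝ} (hx : 0 ≤ x) (n : ℕ) : 0 ≤ poch x n := by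
  induction n with
  | zero => simp [poch_zero]
  | succ n ih => rw [poch_succ]; positivity

lemma poch_mono {x y : ℝ} (hx : 0 ≤ x) (hxy : x ≤ y) (n : ℕ) : poch x n ≤ poch y n := by
  induction n with
  | zero => simp [poch_zero]
  | succ n ih =>
    rw [poch_succ, poch_succ]
    have := poch_nonneg hx n
    have := poch_nonneg (hx.trans hxy) n
    have hxn : (0:ℝ) ≤ x + n := by positivity
    nlinarith

lemma abs_poch_le (a : ℝ) (n : ℕ) : |poch a n| ≤ poch |a| n := by
  induction n with
  | zero => simp [poch_zero]
  | succ n ih =>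
    rw [poch_succ, poch_succ, abs_mul]
    have h1 : |a + (n:ℝ)| ≤ |a| + n := by
      calc |a + (n:ℝ)| ≤ |a| + |(n:ℝ)| := abs_add_le _ _
      _ = |a| + n := by rw [Nat.abs_cast]
    have h2 : (0:ℝ) ≤ |a| + n := by positivity
    have := abs_nonneg (poch a n)
    nlinarith [poch_nonneg (abs_nonneg a) n]

lemma poch_ne_zero {c : ℝ} (hc : ∀ k : ℕ, c ≠ -(k:ℝ)) (n : ℕ) : poch c n ≠ 0 := by
  induction n with
  | zero => simp [poch_zero]
  | succ n ih =>
    rw [poch_succ]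
    refine mul_ne_zero ih ?_
    intro h
    exact hc n (by linarith)

lemma poch_one_eq_factorial (n : ℕ) : poch 1 n = n.factorial := by
  induction n with
  | zero => simp [poch_zero]
  | succ n ih => rw [poch_succ, ih, Nat.factorial_succ]; push_cast; ring

lemma poch_natCast_factorial (N k : ℕ) :
    (N.factorial : ℝ) * poch (N+1) k = ((N+k).factorial : ℝ) := by
  induction k with
  | zero => simp [poch_zero]
  | succ k ih =>
    rw [poch_succ, ← mul_assoc, ih, show N + (k+1) = (N+k)+1 from rfl, Nat.factorial_succ]
    push_cast; ring

lemma raabe {u : ℕ → ℝ} {δ : ℝ} (hδ : 0 < δ) (hu : ∀ k, 0 ≤ u k) (K : ℕ)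
    (h : ∀ k, K ≤ k → δ * u k ≤ (k:ℝ) * u k - ((k:ℝ)+1) * u (k+1)) :
    Summable u ∧ Tendsto (fun k : ℕ => (k:ℝ) * u k) atTop (𝓝 0) := by
  set g : ℕ → ℝ := fun k => (k:ℝ) * u k with hg
  have hg0 : ∀ k, 0 ≤ g k := fun k => mul_nonneg (by positivity) (hu k)
  have hstep : ∀ i : ℕ, δ * u (i + K) ≤ g (i + K) - g (i + K + 1) := by
    intro i
    have := h (i + K) (Nat.le_add_left _ _)
    simpa [hg] using this
  -- summability
  have hsum' : Summable (fun i => u (i + K)) := by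
    apply summable_of_sum_range_le (c := g K / δ) (fun i => hu _)
    intro n
    have htel : ∑ i ∈ Finset.range n, (g (i + K) - g ((i+1) + K)) = g K - g (n + K) := by
      simpa using Finset.sum_range_sub' (fun i => g (i + K)) n
    have h1 : δ * ∑ i ∈ Finset.range n, u (i + K) ≤ g K - g (n + K) := by
      rw [Finset.mul_sum, ← htel]
      apply Finset.sum_le_sum
      intro i _
      have := hstep i
      have : δ * u (i + K) ≤ g (i + K) - g (i + K + 1) := this
      simpa [Nat.add_right_comm] using this
    have h2 : δ * ∑ i ∈ Finset.range n, u (i + K) ≤ g K := le_trans h1 (by linarith [hg0 (n+K)])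
    rw [le_div_iff₀ hδ]
    linarith [h2]
  have hsum : Summable u := (summable_nat_add_iff K).1 hsum'
  refine ⟨hsum, ?_⟩
  -- antitone
  have hanti : Antitone (fun i => g (i + K)) := by
    apply antitone_nat_of_succ_le
    intro i
    have := hstep i
    have h2 := mul_nonneg hδ.le (hu (i + K))
    simp only [Nat.add_right_comm i 1 K]
    linarith
  rcases tendsto_of_antitone hanti with hbot | ⟨L, hL⟩
  · exfalso
    obtain ⟨k, hk⟩ := (hbot.eventually (eventually_le_atBot (-1))).exists
    linarith [hg0 (k + K)]
  have hL0 : 0 ≤ L := ge_of_tendsto hL (Eventually.of_forall fun k => hg0 _)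
  have hLzero : L = 0 := by
    by_contra hne
    have hLpos : 0 < L := lt_of_le_of_ne hL0 (Ne.symm hne)
    have hge : ∀ i : ℕ, L ≤ g (i + K) := fun i => hanti.le_of_tendsto hL i
    have hcomp : ∀ i : ℕ, L / ((i:ℝ) + (K+1)) ≤ u (i + (K + 1)) := by
      intro i
      have hpos : (0:ℝ) < (i:ℝ) + (K+1) := by positivity
      have := hge (i + 1)
      have hgi : g (i + 1 + K) = ((i:ℝ) + (K+1)) * u (i + (K+1)) := by
        simp only [hg]
        rw [show i + 1 + K = i + (K+1) by omega]
        push_cast; ring_nf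
      rw [hgi] at this
      rw [div_le_iff₀ hpos]
      linarith [this]
    have hsum2 : Summable (fun i => u (i + (K+1))) := (summable_nat_add_iff (K+1)).2 hsum
    have hsum3 : Summable (fun i : ℕ => L / ((i:ℝ) + (K+1))) :=
      Summable.of_nonneg_of_le (fun i => by positivity) hcomp hsum2
    have hsum4 : Summable (fun i : ℕ => 1 / ((i:ℝ) + (K+1))) := by
      have := hsum3.div_const L
      refine this.congr fun i => ?_
      field_simp
    have hsum5 : Summable (fun n : ℕ => 1 / (n:ℝ)) := by
      refine (summable_nat_add_iff (K+1)).1 ?_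
      refine hsum4.congr fun i => ?_
      push_cast; ring_nf
    exact Real.not_summable_one_div_natCast hsum5
  rw [hLzero] at hL
  exact (tendsto_add_atTop_iff_nat K).1 hL

lemma summable_poch4 {a b c d : ℝ} (ha : 0 < a) (hb : 0 < b) (hc : 0 < c) (hd : 0 < d)
    (h : a + b + 1 < c + d) :
    Summable (fun k => poch a k * poch b k / (poch c k * poch d k)) ∧
    Tendsto (fun k : ℕ => (k:ℝ) * (poch a k * poch b k / (poch c k * poch d k)))
      atTop (𝓝 0) := by
  set u : ℕ → ℝ := fun k => poch a k * poch b k / (poch c k * poch d k) with hu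
  have hupos : ∀ k, 0 < u k := fun k =>
    div_pos (mul_pos (poch_pos ha k) (poch_pos hb k)) (mul_pos (poch_pos hc k) (poch_pos hd k))
  set s : ℝ := c + d - a - b with hs
  have hs1 : 1 < s := by simp only [hs]; linarith
  have hδ : 0 < (s-1)/2 := by linarith
  set e₁ : ℝ := c*d - a*b - a - b with he₁
  set e₂ : ℝ := -(a*b) with he₂
  have t0 : Tendsto (fun k : ℕ => 1/(k:ℝ)) atTop (𝓝 0) := tendsto_one_div_atTop_nhds_zero_nat
  have key : Tendsto (fun k : ℕ => (k:ℝ) - ((k:ℝ)+1) * ((a+k)*(b+k)/((c+k)*(d+k))))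
      atTop (𝓝 (s-1)) := by
    have tnum : Tendsto (fun k : ℕ => (s-1) + e₁*(1/(k:ℝ)) + e₂*(1/(k:ℝ))^2)
        atTop (𝓝 ((s-1) + e₁*0 + e₂*0^2)) :=
      ((tendsto_const_nhds.add ((t0.const_mul e₁))).add ((t0.pow 2).const_mul e₂)).congr
        (fun k => by ring)
    have tden : Tendsto (fun k : ℕ => 1 + (c+d)*(1/(k:ℝ)) + (c*d)*(1/(k:ℝ))^2)
        atTop (𝓝 (1 + (c+d)*0 + (c*d)*0^2)) :=
      ((tendsto_const_nhds.add ((t0.const_mul (c+d)))).add ((t0.pow 2).const_mul (c*d))).congr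
        (fun k => by ring)
    have tq := tnum.div tden (by norm_num)
    have tq' : Tendsto (fun k : ℕ =>
        ((s-1) + e₁*(1/(k:ℝ)) + e₂*(1/(k:ℝ))^2) / (1 + (c+d)*(1/(k:ℝ)) + (c*d)*(1/(k:ℝ))^2))
        atTop (𝓝 (s-1)) := by
      convert tq using 2 <;> norm_num
    refine tq'.congr' ?_
    filter_upwards [eventually_ge_atTop 1] with k hk
    have hk0 : (0:ℝ) < (k:ℝ) := by exact_mod_cast hk
    have h1 : (c:ℝ)+k ≠ 0 := by positivity
    have h2 : (d:ℝ)+k ≠ 0 := by positivity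
    have h3 : (k:ℝ) ≠ 0 := ne_of_gt hk0
    field_simp
    ring
  have hev := key.eventually_const_le (show (s-1)/2 < s-1 by linarith)
  obtain ⟨K, hK⟩ := eventually_atTop.1 hev
  have main := raabe hδ (fun k => (hupos k).le) K ?_
  · exact ⟨main.1.congr (fun k => rfl), main.2⟩
  intro k hk
  have hρ : u (k+1) = u k * ((a+k)*(b+k)/((c+k)*(d+k))) := by
    have p1 := poch_pos hc k; have p2 := poch_pos hd k
    have p3 : (0:ℝ) < c + k := by positivity
    have p4 : (0:ℝ) < d + k := by positivity
    simp only [hu]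
    rw [poch_succ, poch_succ, poch_succ, poch_succ, div_mul_div_comm,
      div_eq_div_iff (by positivity) (by positivity)]
    ring
  have hKk := hK k hk
  have hupos' := hupos k
  rw [hρ]
  nlinarith [hKk, hupos']

lemma summable_T {a b c : ℝ} (hc : ∀ k : ℕ, c ≠ -(k:ℝ)) (h : a + b < c) :
    Summable (fun n : ℕ => |poch a n * poch b n / (poch c n * n.factorial)|) ∧
    Tendsto (fun n : ℕ => (n:ℝ) * (poch a n * poch b n / (poch c n * n.factorial)))
      atTop (𝓝 0) := by
  obtain ⟨N, hN⟩ := exists_nat_ge (max (1-a) (max (1-b) (1-c)))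
  have hNa : 1 ≤ a + N := by have := le_trans (le_max_left _ _) hN; linarith
  have hNb : 1 ≤ b + N := by
    have := le_trans (le_trans (le_max_left _ _) (le_max_right _ _)) hN; linarith
  have hNc : 1 ≤ c + N := by
    have := le_trans (le_trans (le_max_right _ _) (le_max_right _ _)) hN; linarith
  set T : ℕ → ℝ := fun n => poch a n * poch b n / (poch c n * n.factorial) with hT
  set u : ℕ → ℝ := fun k =>
    poch (a+N) k * poch (b+N) k / (poch (c+N) k * poch ((N:ℝ)+1) k) with hu
  have hp4 := summable_poch4 (a := a+N) (b := b+N) (c := c+N) (d := (N:ℝ)+1)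
    (by linarith) (by linarith) (by linarith) (by positivity) (by linarith)
  set C₀ : ℝ := |poch a N| * |poch b N| / (|poch c N| * N.factorial) with hC₀
  have hpcN : poch c N ≠ 0 := poch_ne_zero hc N
  have claim : ∀ k : ℕ, |T (N+k)| = C₀ * u k := by
    intro k
    have pA := poch_nonneg (by linarith : (0:ℝ) ≤ a + N) k
    have pB := poch_nonneg (by linarith : (0:ℝ) ≤ b + N) k
    have pC := poch_pos (by linarith : (0:ℝ) < c + N) k
    have pD := poch_pos (by positivity : (0:ℝ) < (N:ℝ)+1) k
    have hfac : ((N+k).factorial : ℝ) = (N.factorial : ℝ) * poch ((N:ℝ)+1) k := by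
      rw [poch_natCast_factorial]
    have hNfac : (0:ℝ) < N.factorial := by positivity
    simp only [hT, hu, hC₀]
    rw [poch_add a N k, poch_add b N k, poch_add c N k, hfac, abs_div]
    simp only [abs_mul]
    rw [abs_of_nonneg pA, abs_of_nonneg pB, abs_of_nonneg pC.le, abs_of_nonneg pD.le,
      abs_of_nonneg hNfac.le]
    rw [div_mul_div_comm, div_eq_div_iff (by positivity) (by positivity)]
    ring
  have hsum : Summable (fun n : ℕ => |T n|) := by
    refine (summable_nat_add_iff N).1 ?_
    refine (hp4.1.mul_left C₀).congr fun k => ?_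
    rw [← claim k, Nat.add_comm]
  refine ⟨hsum, ?_⟩
  have hu0 : Tendsto u atTop (𝓝 0) := hp4.1.tendsto_atTop_zero
  have habs : Tendsto (fun n : ℕ => (n:ℝ) * |T n|) atTop (𝓝 0) := by
    refine (tendsto_add_atTop_iff_nat N).1 ?_
    have : Tendsto (fun k : ℕ => C₀ * ((k:ℝ) * u k) + ((N:ℝ) * C₀) * u k) atTop
        (𝓝 (C₀ * 0 + ((N:ℝ) * C₀) * 0)) := ((hp4.2.const_mul C₀).add (hu0.const_mul _))
    rw [show C₀ * 0 + ((N:ℝ) * C₀) * 0 = 0 by ring] at this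
    refine this.congr fun k => ?_
    rw [Nat.add_comm k N, claim k]
    push_cast; ring
  refine squeeze_zero_norm (fun n => ?_) habs
  rw [Real.norm_eq_abs, abs_mul, Nat.abs_cast]

lemma hc_succ {c : ℝ} (hc : ∀ k : ℕ, c ≠ -(k:ℝ)) : ∀ k : ℕ, c + 1 ≠ -(k:ℝ) := by
  intro k hk
  have := hc (k+1)
  push_cast at this
  exact this (by linarith)

lemma step {a b c : ℝ} (hc : ∀ k : ℕ, c ≠ -(k:ℝ)) (h : a + b < c) :
    (∑' n : ℕ, poch a n * poch b n / (poch c n * n.factorial)) =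
      ((c-a)*(c-b))/(c*(c-a-b)) *
        ∑' n : ℕ, poch a n * poch b n / (poch (c+1) n * n.factorial) := by
  have hc1 := hc_succ hc
  have hc0 : c ≠ 0 := by simpa using hc 0
  have hcab : c - a - b ≠ 0 := by intro hx; linarith [h]
  set T : ℕ → ℝ := fun n => poch a n * poch b n / (poch c n * n.factorial) with hT
  set T' : ℕ → ℝ := fun n => poch a n * poch b n / (poch (c+1) n * n.factorial) with hT'
  set w : ℕ → ℝ := fun n => (n:ℝ) * T n with hw
  have hS : Summable T := (summable_T hc h).1.of_abs
  have hS' : Summable T' := (summable_T hc1 (by linarith)).1.of_abs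
  have hw0 : Tendsto w atTop (𝓝 0) := (summable_T hc h).2
  have hterm : ∀ n : ℕ, c*(c-a-b) * T n - (c-a)*(c-b) * T' n = c * (w n - w (n+1)) := by
    intro n
    have hpoch : poch (c+1) n = poch c n * (c + n) / c := by
      have h1 : poch c (1+n) = poch c 1 * poch (c+1) n := by
        simpa using poch_add c 1 n
      rw [poch_one] at h1
      have h2 : poch c (1+n) = poch c n * (c+n) := by rw [Nat.add_comm 1 n, poch_succ]
      rw [h2] at h1
      field_simp
      linarith [h1]
    have hPc : poch c n ≠ 0 := poch_ne_zero hc n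
    have hcn : c + (n:ℝ) ≠ 0 := by
      intro hx; exact hc n (by linarith)
    have hfac : ((n:ℕ).factorial : ℝ) ≠ 0 := by positivity
    have hfacs : (((n+1):ℕ).factorial : ℝ) = ((n:ℝ)+1) * n.factorial := by
      rw [Nat.factorial_succ]; push_cast; ring
    simp only [hT, hT', hw]
    rw [hpoch, poch_succ a, poch_succ b, poch_succ c, hfacs]
    have hn1 : ((n:ℝ)+1) ≠ 0 := by positivity
    push_cast
    field_simp
    ring
  -- summability of the combination
  have hD : Summable (fun n => c*(c-a-b) * T n - (c-a)*(c-b) * T' n) :=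
    ((hS.mul_left _).sub (hS'.mul_left _))
  have hg : Summable (fun n => w n - w (n+1)) := by
    refine (hD.mul_left (1/c)).congr fun n => ?_
    rw [hterm n]
    field_simp
  have hgsum : (∑' n, (w n - w (n+1))) = 0 := by
    have h1 := hg.hasSum.tendsto_sum_nat
    have h2 : ∀ N : ℕ, ∑ i ∈ Finset.range N, (w i - w (i+1)) = w 0 - w N :=
      fun N => Finset.sum_range_sub' w N
    have h3 : Tendsto (fun N => ∑ i ∈ Finset.range N, (w i - w (i+1))) atTop (𝓝 0) := by
      have ht : Tendsto (fun N : ℕ => w 0 - w N) atTop (𝓝 (w 0 - 0)) :=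
        tendsto_const_nhds.sub hw0
      have hz : w 0 - 0 = 0 := by simp [hw]
      rw [hz] at ht
      exact ht.congr fun N => (h2 N).symm
    exact tendsto_nhds_unique h1 h3
  have hkey : c*(c-a-b) * (∑' n, T n) - (c-a)*(c-b) * (∑' n, T' n) = 0 := by
    rw [← tsum_mul_left, ← tsum_mul_left, ← Summable.tsum_sub (hS.mul_left _) (hS'.mul_left _)]
    have : (∑' n, (c*(c-a-b) * T n - (c-a)*(c-b) * T' n)) = ∑' n, c * (w n - w (n+1)) :=
      tsum_congr hterm
    rw [this, tsum_mul_left, hgsum, mul_zero]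
  rw [div_mul_eq_mul_div, eq_div_iff (by exact mul_ne_zero hc0 hcab)]
  linarith [hkey]

lemma Q_eq_gammaSeq {a b c : ℝ} (hc : ∀ k : ℕ, c ≠ -(k:ℝ)) (h : a + b < c)
    (n : ℕ) (hn : 1 ≤ n) :
    (∏ k ∈ Finset.range (n+1),
        ((c+(k:ℝ)-a)*(c+(k:ℝ)-b))/((c+(k:ℝ))*(c+(k:ℝ)-a-b))) =
      Real.GammaSeq c n * Real.GammaSeq (c-a-b) n /
        (Real.GammaSeq (c-a) n * Real.GammaSeq (c-b) n) := by
  have hQ : (∏ k ∈ Finset.range (n+1),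
      ((c+(k:ℝ)-a)*(c+(k:ℝ)-b))/((c+(k:ℝ))*(c+(k:ℝ)-a-b))) =
      poch (c-a) (n+1) * poch (c-b) (n+1) / (poch c (n+1) * poch (c-a-b) (n+1)) := by
    rw [poch_eq_prod, poch_eq_prod, poch_eq_prod, poch_eq_prod,
      ← Finset.prod_mul_distrib, ← Finset.prod_mul_distrib, ← Finset.prod_div_distrib]
    exact Finset.prod_congr rfl fun k _ => by ring
  have hGS : ∀ x : ℝ, Real.GammaSeq x n = (n:ℝ)^x * n.factorial / poch x (n+1) := by
    intro x
    rw [Real.GammaSeq, poch_eq_prod]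
  have hn0 : (0:ℝ) < (n:ℝ) := by exact_mod_cast hn
  rw [hQ, hGS, hGS, hGS, hGS]
  by_cases hca : poch (c-a) (n+1) = 0
  · rw [hca]; simp
  by_cases hcb : poch (c-b) (n+1) = 0
  · rw [hcb]; simp
  have hpc : poch c (n+1) ≠ 0 := poch_ne_zero hc (n+1)
  have hps : (0:ℝ) < poch (c-a-b) (n+1) := poch_pos (by linarith) (n+1)
  have hfac : (0:ℝ) < n.factorial := by positivity
  have hp1 : (0:ℝ) < (n:ℝ)^c := Real.rpow_pos_of_pos hn0 c
  have hp2 : (0:ℝ) < (n:ℝ)^(c-a-b) := Real.rpow_pos_of_pos hn0 _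
  have hp3 : (0:ℝ) < (n:ℝ)^(c-a) := Real.rpow_pos_of_pos hn0 _
  have hp4 : (0:ℝ) < (n:ℝ)^(c-b) := Real.rpow_pos_of_pos hn0 _
  have key : (n:ℝ)^c * (n:ℝ)^(c-a-b) = (n:ℝ)^(c-a) * (n:ℝ)^(c-b) := by
    rw [← Real.rpow_add hn0, ← Real.rpow_add hn0]
    congr 1
    ring
  field_simp
  linear_combination (-1 : ℝ) * key

lemma tendsto_F_one {a b c : ℝ} (hc : ∀ k : ℕ, c ≠ -(k:ℝ)) (h : a + b < c) :
    Tendsto (fun m : ℕ =>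
        ∑' n : ℕ, poch a n * poch b n / (poch (c + (m:ℝ)) n * n.factorial))
      atTop (𝓝 1) := by
  set α : ℝ := |a| + 1 with hα
  set β : ℝ := |b| + 1 with hβ
  set c₀ : ℝ := α + β + 1 with hc₀
  have hα0 : 0 < α := by positivity
  have hβ0 : 0 < β := by positivity
  have hc₀0 : 0 < c₀ := by positivity
  set u₀ : ℕ → ℝ := fun k => poch α k * poch β k / (poch c₀ k * k.factorial) with hu₀
  have hu₀sum : Summable u₀ := by
    refine (summable_poch4 hα0 hβ0 hc₀0 one_pos (by rw [hc₀]; linarith)).1.congr fun k => ?_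
    rw [hu₀, poch_one_eq_factorial]
  have hS₁sum : Summable (fun k => u₀ (k+1)) := (summable_nat_add_iff 1).2 hu₀sum
  set S₁ : ℝ := ∑' k, u₀ (k+1) with hS₁
  have hbound : ∀ m : ℕ, c₀ ≤ c + m →
      |(∑' n : ℕ, poch a n * poch b n / (poch (c + (m:ℝ)) n * n.factorial)) - 1|
        ≤ c₀ / (c + m) * S₁ := by
    intro m hm
    set c' : ℝ := c + m with hc'
    have hc'0 : 0 < c' := lt_of_lt_of_le hc₀0 hm
    have hcm : ∀ k : ℕ, c' ≠ -(k:ℝ) := by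
      intro k hk
      have hk0 : (0:ℝ) ≤ (k:ℝ) := by positivity
      linarith
    have hm' : a + b < c' := by
      have h2 : a + b ≤ |a| + |b| := add_le_add (le_abs_self a) (le_abs_self b)
      have h3 : |a| + |b| + 3 = c₀ := by rw [hc₀, hα, hβ]; ring
      linarith
    set Tm : ℕ → ℝ := fun n => poch a n * poch b n / (poch c' n * n.factorial) with hTm
    have hTsum : Summable Tm := (summable_T hcm hm').1.of_abs
    have hTabs : Summable (fun n => |Tm n|) := (summable_T hcm hm').1
    have hzero : Tm 0 = 1 := by simp [hTm, poch_zero]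
    have hsplit : (∑' n, Tm n) = 1 + ∑' k, Tm (k+1) := by
      rw [Summable.tsum_eq_zero_add hTsum, hzero]
    have htermbd : ∀ k : ℕ, |Tm (k+1)| ≤ c₀ / c' * u₀ (k+1) := by
      intro k
      have hPc' : (0:ℝ) < poch c' (k+1) := poch_pos hc'0 (k+1)
      have hPc₀ : (0:ℝ) < poch c₀ (k+1) := poch_pos hc₀0 (k+1)
      have hF : (0:ℝ) < ((k+1).factorial : ℝ) := by positivity
      have hA : (0:ℝ) ≤ poch α (k+1) * poch β (k+1) :=
        mul_nonneg (poch_nonneg hα0.le _) (poch_nonneg hβ0.le _)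
      have habs : |Tm (k+1)| ≤ poch α (k+1) * poch β (k+1) / (poch c' (k+1) * (k+1).factorial) := by
        rw [hTm, abs_div, abs_of_pos (mul_pos hPc' hF), abs_mul]
        rw [div_le_div_iff_of_pos_right (mul_pos hPc' hF)]
        have h1 : |poch a (k+1)| ≤ poch α (k+1) :=
          (abs_poch_le a _).trans (poch_mono (abs_nonneg a) (by rw [hα]; linarith) _)
        have h2 : |poch b (k+1)| ≤ poch β (k+1) :=
          (abs_poch_le b _).trans (poch_mono (abs_nonneg b) (by rw [hβ]; linarith) _)
        exact mul_le_mul h1 h2 (abs_nonneg _) (poch_nonneg (by positivity) _)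
      have hclaim : c' * poch c₀ (k+1) ≤ c₀ * poch c' (k+1) := by
        have e1 : poch c₀ (k+1) = c₀ * poch (c₀+1) k := by
          rw [show k + 1 = 1 + k from Nat.add_comm k 1, poch_add, poch_one]; norm_num
        have e2 : poch c' (k+1) = c' * poch (c'+1) k := by
          rw [show k + 1 = 1 + k from Nat.add_comm k 1, poch_add, poch_one]; norm_num
        rw [e1, e2]
        have := poch_mono (by positivity : (0:ℝ) ≤ c₀ + 1) (by linarith : c₀ + 1 ≤ c' + 1) k
        have hcc : 0 < c₀ * c' := mul_pos hc₀0 hc'0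
        nlinarith
      refine habs.trans ?_
      have hrhs : c₀ / c' * u₀ (k+1) = c₀ * (poch α (k+1) * poch β (k+1)) /
          (c' * (poch c₀ (k+1) * (k+1).factorial)) := by
        rw [hu₀, div_mul_div_comm]
      rw [hrhs, div_le_div_iff₀ (mul_pos hPc' hF) (by positivity)]
      nlinarith [mul_nonneg hA hF.le, mul_le_mul_of_nonneg_right hclaim (mul_nonneg hA hF.le)]
    have habs_tail : |∑' k, Tm (k+1)| ≤ c₀ / c' * S₁ := by
      have hsum2 : Summable (fun k => ‖Tm (k+1)‖) := by
        simpa only [Real.norm_eq_abs] using ((summable_nat_add_iff 1).2 hTabs)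
      have h1 : |∑' k, Tm (k+1)| ≤ ∑' k, |Tm (k+1)| := by
        simpa only [Real.norm_eq_abs] using norm_tsum_le_tsum_norm hsum2
      have h2 : (∑' k, |Tm (k+1)|) ≤ ∑' k, c₀ / c' * u₀ (k+1) := by
        exact Summable.tsum_le_tsum htermbd ((summable_nat_add_iff 1).2 hTabs)
          (hS₁sum.mul_left (c₀ / c'))
      have h3 : (∑' k, c₀ / c' * u₀ (k+1)) = c₀ / c' * S₁ := by
        rw [hS₁]; exact tsum_mul_left
      linarith
    calc |(∑' n, Tm n) - 1| = |∑' k, Tm (k+1)| := by rw [hsplit]; congr 1; ring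
    _ ≤ c₀ / c' * S₁ := habs_tail
  -- conclude by squeeze
  obtain ⟨M, hM⟩ := exists_nat_ge (c₀ - c)
  have hb0 : Tendsto (fun m : ℕ => c₀ * S₁ / (c + m)) atTop (𝓝 0) :=
    Tendsto.div_atTop tendsto_const_nhds
      (tendsto_atTop_add_const_left _ c tendsto_natCast_atTop_atTop)
  have hdiff : Tendsto (fun m : ℕ =>
      (∑' n : ℕ, poch a n * poch b n / (poch (c + (m:ℝ)) n * n.factorial)) - 1)
      atTop (𝓝 0) := by
    apply squeeze_zero_norm' ?_ hb0
    filter_upwards [eventually_ge_atTop M] with m hm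
    have hcm : c₀ ≤ c + m := by
      have : (M:ℝ) ≤ (m:ℝ) := by exact_mod_cast hm
      linarith
    have := hbound m hcm
    rw [Real.norm_eq_abs]
    calc |(∑' n : ℕ, poch a n * poch b n / (poch (c + (m:ℝ)) n * n.factorial)) - 1|
        ≤ c₀ / (c + m) * S₁ := this
    _ = c₀ * S₁ / (c + m) := by ring
  have := hdiff.add (tendsto_const_nhds (x := (1:ℝ)))
  simp only [zero_add] at this
  refine this.congr fun m => by ring

lemma hyp_shift {c : ℝ} (hc : ∀ k : ℕ, c ≠ -(k:ℝ)) (m : ℕ) :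
    ∀ k : ℕ, c + (m:ℝ) ≠ -(k:ℝ) := by
  intro k hk
  have := hc (k + m)
  push_cast at this
  exact this (by linarith)

lemma F_iterate {a b c : ℝ} (hc : ∀ k : ℕ, c ≠ -(k:ℝ)) (h : a + b < c) (m : ℕ) :
    (∑' n : ℕ, poch a n * poch b n / (poch c n * n.factorial)) =
      (∏ k ∈ Finset.range m, ((c+(k:ℝ)-a)*(c+(k:ℝ)-b))/((c+(k:ℝ))*(c+(k:ℝ)-a-b))) *
      ∑' n : ℕ, poch a n * poch b n / (poch (c + (m:ℝ)) n * n.factorial) := by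
  induction m with
  | zero => simp
  | succ m ih =>
    have hcm : ∀ k : ℕ, c + (m:ℝ) ≠ -(k:ℝ) := hyp_shift hc m
    have hm : a + b < c + m := by
      have : (0:ℝ) ≤ (m:ℝ) := by positivity
      linarith
    have hstep := step hcm hm
    have hcast : c + (m:ℝ) + 1 = c + ((m+1 : ℕ):ℝ) := by push_cast; ring
    rw [hcast] at hstep
    rw [ih, hstep, Finset.prod_range_succ]
    ring

/-- Gauss's summation theorem: for `C > A + B` and `C` not a nonpositive integer,
the hypergeometric series converges absolutely at `z = 1` and
`₂F₁(A,B,C;1) = Γ(C)Γ(C−A−B)/(Γ(C−A)Γ(C−B))`. -/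
theorem gauss_summation (A B C : ℝ) (hC : ∀ k : ℕ, C ≠ -(k : ℝ)) (hsum : A + B < C) :
    Summable (fun n : ℕ => |poch A n * poch B n / (poch C n * (n.factorial : ℝ)) * (1 : ℝ) ^ n|) ∧
    hyp A B C 1 =
      Real.Gamma C * Real.Gamma (C - A - B) / (Real.Gamma (C - A) * Real.Gamma (C - B)) := by
  have hsummable := (summable_T hC hsum).1
  constructor
  · simpa [one_pow] using hsummable
  have hF : hyp A B C 1 = ∑' n : ℕ, poch A n * poch B n / (poch C n * n.factorial) := by
    unfold hyp
    exact tsum_congr fun n => by rw [one_pow, mul_one]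
  rw [hF]
  set F : ℝ → ℝ := fun c => ∑' n : ℕ, poch A n * poch B n / (poch c n * n.factorial) with hFdef
  set Q : ℕ → ℝ := fun m => ∏ k ∈ Finset.range m,
    ((C+(k:ℝ)-A)*(C+(k:ℝ)-B))/((C+(k:ℝ))*(C+(k:ℝ)-A-B)) with hQdef
  have hiter : ∀ m : ℕ, F C = Q m * F (C + (m:ℝ)) := fun m => F_iterate hC hsum m
  have hFm : Tendsto (fun m : ℕ => F (C + (m:ℝ))) atTop (𝓝 1) := tendsto_F_one hC hsum
  have hFm1 : Tendsto (fun n : ℕ => F (C + ((n+1 : ℕ):ℝ))) atTop (𝓝 1) :=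
    (tendsto_add_atTop_iff_nat 1).2 hFm
  by_cases hdeg : Real.Gamma (C-A) = 0 ∨ Real.Gamma (C-B) = 0
  · have hQ0 : ∃ m₀ : ℕ, Q (m₀ + 1) = 0 := by
      rcases hdeg with hd | hd
      · obtain ⟨m₀, hm₀⟩ := (Real.Gamma_eq_zero_iff _).1 hd
        refine ⟨m₀, Finset.prod_eq_zero (Finset.self_mem_range_succ m₀) ?_⟩
        rw [show C + (m₀:ℝ) - A = 0 by linarith, zero_mul, zero_div]
      · obtain ⟨m₀, hm₀⟩ := (Real.Gamma_eq_zero_iff _).1 hd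
        refine ⟨m₀, Finset.prod_eq_zero (Finset.self_mem_range_succ m₀) ?_⟩
        rw [show C + (m₀:ℝ) - B = 0 by linarith, mul_zero, zero_div]
    obtain ⟨m₀, hQ0⟩ := hQ0
    have hF0 : F C = 0 := by rw [hiter (m₀+1)]; push_cast [hQ0]; ring
    have hFC : (∑' n : ℕ, poch A n * poch B n / (poch C n * ↑n.factorial)) = F C := rfl
    rw [hFC, hF0]
    rcases hdeg with hd | hd
    · rw [hd, zero_mul, div_zero]
    · rw [hd, mul_zero, div_zero]
  · push_neg at hdeg
    have hlim : Tendsto (fun n : ℕ => Q (n+1)) atTop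
        (𝓝 (Real.Gamma C * Real.Gamma (C-A-B) / (Real.Gamma (C-A) * Real.Gamma (C-B)))) := by
      have hgs := ((Real.GammaSeq_tendsto_Gamma C).mul
          (Real.GammaSeq_tendsto_Gamma (C-A-B))).div
        ((Real.GammaSeq_tendsto_Gamma (C-A)).mul (Real.GammaSeq_tendsto_Gamma (C-B)))
        (mul_ne_zero hdeg.1 hdeg.2)
      refine hgs.congr' ?_
      filter_upwards [eventually_ge_atTop 1] with n hn
      exact (Q_eq_gammaSeq hC hsum n hn).symm
    have hconst : Tendsto (fun n : ℕ => Q (n+1) * F (C + ((n+1 : ℕ):ℝ))) atTop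
        (𝓝 (Real.Gamma C * Real.Gamma (C-A-B) / (Real.Gamma (C-A) * Real.Gamma (C-B)) * 1)) :=
      hlim.mul hFm1
    have heq : (fun _ : ℕ => F C) = fun n : ℕ => Q (n+1) * F (C + ((n+1 : ℕ):ℝ)) :=
      funext fun n => hiter (n+1)
    have := tendsto_nhds_unique (heq ▸ tendsto_const_nhds) hconst
    rw [mul_one] at this
    exact this
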